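/- For the logistic function Λ(u) = exp(u)/(1+exp(u)) and any reals α, x₁, x₂, the expression Λ(α+x₂)·(1-Λ(α+x₁)) / [Λ(α+x₂)·(1-Λ(α+x₁)) + Λ(α+x₁)·(1-Λ(α+x₂))] equals Λ(x₂-x₁), and in particular does not depend on α. -/

import Mathlib

noncomputable def Lam (u : ℝ) : ℝ := Real.exp u / (1 + Real.exp u)

theorem stmt_1 (α x₁ x₂ : ℝ) :
    Lam (α + x₂) * (1 - Lam (α + x₁)) /
      (Lam (α + x₂) * (1 - Lam (α + x₁)) + Lam (α + x₁) * (1 - Lam (α + x₂)))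
      = Lam (x₂ - x₁) := by
  have h : ∀ u : ℝ, (0:ℝ) < 1 + Real.exp u := fun u => by positivity
  have h1 := (h (α + x₁)).ne'
  have h2 := (h (α + x₂)).ne'
  have h3 := (h (x₂ - x₁)).ne'
  unfold Lam
  rw [Real.exp_sub]
  have he1 := (Real.exp_pos x₁).ne'
  field_simp
  ring_nf
  rw [Real.exp_add, Real.exp_add]
  have hd : Real.exp α * Real.exp x₂ + Real.exp α * Real.exp x₁ ≠ 0 := by positivity
  field_simp
  ring
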